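/- The matrix (1/2)·[[2,1,1,0],[0,2,1,1],[1,0,2,1],[1,1,0,2]]/2, i.e., the 4×4 matrix C with entries C = (1/4)[[2,1,1,0],[0,2,1,1],[1,0,2,1],[1,1,0,2]], has no qubit implementation: there do not exist density matrices ρ_1,…,ρ_4 on ℂ² and a 4-outcome POVM M on ℂ² with C_{ij} = tr(ρ_i M(j)). -/

import Mathlib

open Matrix BigOperators
open scoped ComplexOrder

lemma trace_ct_mul_self_eq_zero {n m : Type*} [Fintype n] [Fintype m]
    {A : Matrix m n ℂ} (h : (Aᴴ * A).trace = 0) : A = 0 := by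
  have h' : ∑ j, ∑ i, star (A i j) * A i j = 0 := by
    simpa [Matrix.trace, Matrix.diag, Matrix.mul_apply, Matrix.conjTranspose_apply] using h
  ext i j
  have hnn : ∀ j ∈ Finset.univ, (0:ℂ) ≤ ∑ i, star (A i j) * A i j := by
    intro j _
    exact Finset.sum_nonneg fun i _ => star_mul_self_nonneg _
  have h1 := (Finset.sum_eq_zero_iff_of_nonneg hnn).mp h' j (Finset.mem_univ j)
  have h2 := (Finset.sum_eq_zero_iff_of_nonneg
    (fun i _ => star_mul_self_nonneg (A i j))).mp h1 i (Finset.mem_univ i)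
  rcases mul_eq_zero.mp h2 with h3 | h3
  · simpa using congrArg star h3
  · simpa using h3

open scoped MatrixOrder in
lemma psd_exists_sqrt {n : Type*} [Fintype n] [DecidableEq n] {A : Matrix n n ℂ}
    (hA : A.PosSemidef) : ∃ s : Matrix n n ℂ, s * s = A ∧ sᴴ = s :=
  ⟨CFC.sqrt A, CFC.sqrt_mul_sqrt_self A hA.nonneg, (CFC.sqrt_nonneg A).isSelfAdjoint⟩

lemma psd_mul_eq_zero {n : Type*} [Fintype n] [DecidableEq n]
    {A B : Matrix n n ℂ} (hA : A.PosSemidef) (hB : B.PosSemidef)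
    (h : (A * B).trace = 0) : A * B = 0 := by
  obtain ⟨sA, hAe, hAh⟩ := psd_exists_sqrt hA
  obtain ⟨sB, hBe, hBh⟩ := psd_exists_sqrt hB
  have key : sA * sB = 0 := by
    apply trace_ct_mul_self_eq_zero
    rw [conjTranspose_mul, hAh, hBh]
    have e : sB * sA * (sA * sB) = sB * (sA * sA * sB) := by noncomm_ring
    rw [e, trace_mul_comm, hAe, Matrix.mul_assoc, hBe, h]
  calc A * B = sA * (sA * sB) * sB := by rw [← hAe, ← hBe]; noncomm_ring
    _ = 0 := by rw [key]; simp

lemma sandwich_det_zero (Q A : Matrix (Fin 2) (Fin 2) ℂ) (hQ : Q.det = 0) :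
    Q * A * Q = (Q * A).trace • Q := by
  rw [Matrix.det_fin_two] at hQ
  ext i j
  fin_cases i <;> fin_cases j <;>
    simp only [Matrix.mul_apply, Matrix.trace, Matrix.diag, Fin.sum_univ_two,
      Matrix.smul_apply, smul_eq_mul, Fin.isValue, Fin.mk_zero, Fin.mk_one]
  · linear_combination -(A 1 1) * hQ
  · linear_combination A 0 1 * hQ
  · linear_combination A 1 0 * hQ
  · linear_combination -(A 0 0) * hQ

lemma det_one_sub (ρ : Matrix (Fin 2) (Fin 2) ℂ) (htr : ρ.trace = 1) (hd : ρ.det = 0) :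
    (1 - ρ).det = 0 := by
  rw [Matrix.det_fin_two] at hd ⊢
  rw [Matrix.trace_fin_two] at htr
  simp only [Matrix.sub_apply, Matrix.one_apply_eq, Matrix.one_apply_ne (by decide : (0:Fin 2) ≠ 1),
    Matrix.one_apply_ne (by decide : (1:Fin 2) ≠ 0)]
  linear_combination hd - htr


/-- A quantum (dimension-d) implementation of a communication matrix `C`:
states `ρ` are density matrices, `M` is a POVM, and `C a b = tr(ρ_a M(b))`. -/
def QImpl {d n m : ℕ} (C : Matrix (Fin n) (Fin m) ℝ)
    (ρ : Fin n → Matrix (Fin d) (Fin d) ℂ) (M : Fin m → Matrix (Fin d) (Fin d) ℂ) : Prop :=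
  (∀ a, (ρ a).PosSemidef) ∧ (∀ a, (ρ a).trace = 1) ∧
  (∀ b, (M b).PosSemidef) ∧ (∑ b, M b) = 1 ∧
  ∀ a b, (C a b : ℂ) = (ρ a * M b).trace
/-- The matrix C = (1/4)[[2,1,1,0],[0,2,1,1],[1,0,2,1],[1,1,0,2]] has no qubit
implementation. -/
theorem no_qubit_implementation :
    ¬ ∃ (ρ : Fin 4 → Matrix (Fin 2) (Fin 2) ℂ) (M : Fin 4 → Matrix (Fin 2) (Fin 2) ℂ),
      QImpl ((1/4 : ℝ) • !![2, 1, 1, 0; 0, 2, 1, 1; 1, 0, 2, 1; 1, 1, 0, 2]) ρ M := by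
  rintro ⟨ρ, M, hρpsd, hρtr, hMpsd, hMsum, hC⟩
  -- extract the entry equations we need
  have e00 := hC 0 0; have e02 := hC 0 2; have e03 := hC 0 3
  have e10 := hC 1 0; have e11 := hC 1 1; have e13 := hC 1 3
  have e21 := hC 2 1; have e20 := hC 2 0; have e22 := hC 2 2
  have e32 := hC 3 2; have e31 := hC 3 1; have e33 := hC 3 3
  norm_num [Matrix.smul_apply, Matrix.cons_val_three, Matrix.cons_val_two, Matrix.vecHead,
    Matrix.vecTail] at e00 e02 e03 e10 e11 e13 e21 e20 e22 e32 e31 e33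
  -- zero products
  have z03 : ρ 0 * M 3 = 0 := psd_mul_eq_zero (hρpsd 0) (hMpsd 3) e03.symm
  have z10 : ρ 1 * M 0 = 0 := psd_mul_eq_zero (hρpsd 1) (hMpsd 0) e10.symm
  have z21 : ρ 2 * M 1 = 0 := psd_mul_eq_zero (hρpsd 2) (hMpsd 1) e21.symm
  have z32 : ρ 3 * M 2 = 0 := psd_mul_eq_zero (hρpsd 3) (hMpsd 2) e32.symm
  -- M b ≠ 0 (from diagonal value 1/2)
  have hMne : ∀ b : Fin 4, ((1:ℂ)/2) = (ρ b * M b).trace → M b ≠ 0 := by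
    intro b hb h0
    rw [h0, Matrix.mul_zero, Matrix.trace_zero] at hb
    norm_num at hb
  -- each ρ a is singular
  have hdet : ∀ (a b : Fin 4), ρ a * M b = 0 → M b ≠ 0 → (ρ a).det = 0 := by
    intro a b hz hne
    by_contra h
    apply hne
    have h2 := congrArg (fun X => (ρ a)⁻¹ * X) hz
    simpa [← Matrix.mul_assoc, Matrix.nonsing_inv_mul _ (isUnit_iff_ne_zero.mpr h)] using h2
  have d0 : (ρ 0).det = 0 := hdet 0 3 z03 (hMne 3 e33)
  have d1 : (ρ 1).det = 0 := hdet 1 0 z10 (hMne 0 e00)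
  have d2 : (ρ 2).det = 0 := hdet 2 1 z21 (hMne 1 e11)
  have d3 : (ρ 3).det = 0 := hdet 3 2 z32 (hMne 2 e22)
  -- structure of M b
  have struct : ∀ (c b : Fin 4), ρ c * M b = 0 → (ρ c).det = 0 →
      M b = ((1 - ρ c) * M b).trace • (1 - ρ c) := by
    intro c b hz hd
    have zr : M b * ρ c = 0 := by
      have h := congrArg conjTranspose hz
      simpa [conjTranspose_mul, (hMpsd b).1.eq, (hρpsd c).1.eq] using h
    have h1 : (1 - ρ c) * M b * (1 - ρ c) = M b := by
      have e : (1 - ρ c) * M b * (1 - ρ c)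
          = M b - ρ c * M b - (M b * ρ c - ρ c * (M b * ρ c)) := by noncomm_ring
      rw [e, hz, zr]
      simp
    conv_lhs => rw [← h1]
    exact sandwich_det_zero _ _ (det_one_sub (ρ c) (hρtr c) hd)
  have s0 := struct 1 0 z10 d1
  have s1 := struct 2 1 z21 d2
  have s2 := struct 3 2 z32 d3
  have s3 := struct 0 3 z03 d0
  -- trace formula
  have tr_eq : ∀ (a c : Fin 4) (t : ℂ),
      (ρ a * (t • (1 - ρ c))).trace = t * (1 - (ρ a * ρ c).trace) := by
    intro a c t
    rw [Matrix.mul_smul, Matrix.trace_smul, Matrix.mul_sub, Matrix.mul_one,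
      Matrix.trace_sub, hρtr a]
    simp [smul_eq_mul]
  set t0 : ℂ := ((1 - ρ 1) * M 0).trace
  set t1 : ℂ := ((1 - ρ 2) * M 1).trace
  set t2 : ℂ := ((1 - ρ 3) * M 2).trace
  set t3 : ℂ := ((1 - ρ 0) * M 3).trace
  rw [s0, tr_eq] at e00 e20
  rw [s1, tr_eq] at e11 e31
  rw [s2, tr_eq] at e22 e02
  rw [s3, tr_eq] at e33 e13
  rw [Matrix.trace_mul_comm (ρ 2) (ρ 1)] at e20
  rw [Matrix.trace_mul_comm (ρ 3) (ρ 2)] at e31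
  rw [Matrix.trace_mul_comm (ρ 0) (ρ 3)] at e02
  rw [Matrix.trace_mul_comm (ρ 1) (ρ 0)] at e13
  set p01 : ℂ := (ρ 0 * ρ 1).trace
  set p12 : ℂ := (ρ 1 * ρ 2).trace
  set p23 : ℂ := (ρ 2 * ρ 3).trace
  set p30 : ℂ := (ρ 3 * ρ 0).trace
  have final : ((1:ℂ)/2 * (1/2) * (1/2) * (1/2)) = (1/4) * (1/4) * (1/4) * (1/4) := by
    calc ((1:ℂ)/2 * (1/2) * (1/2) * (1/2))
        = (t0 * (1 - p01)) * (t1 * (1 - p12)) * (t2 * (1 - p23)) * (t3 * (1 - p30)) := by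
          rw [← e00, ← e11, ← e22, ← e33]
      _ = (t0 * (1 - p12)) * (t1 * (1 - p23)) * (t2 * (1 - p30)) * (t3 * (1 - p01)) := by ring
      _ = ((1:ℂ)/4) * (1/4) * (1/4) * (1/4) := by rw [← e20, ← e31, ← e02, ← e13]
  norm_num at final
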